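/- Let d ≥ 1 and let ‖·‖ denote the ℓ¹-norm. There exist constants c = c(d) > 0 and N₀ such that for all N ≥ N₀, for every x ∈ [N]^d = {0,...,N}^d and every V ⊆ [N]^d whose complement V^c = [N]^d \ V satisfies |V^c| ≤ N^d / 2, one has ∑_{y ∈ V, y ≠ x} ‖x - y‖^{-d} ≥ c log(N^d / |V^c|). -/

import Mathlib

namespace Stmt3Aux

variable {d N : ℕ} {x y : Fin d → ℤ} {r s : ℕ}

noncomputable def ball (d N : ℕ) (x : Fin d → ℤ) (r : ℕ) : Finset (Fin d → ℤ) :=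
  Finset.Icc (fun i => max 0 (x i - (r:ℤ))) (fun i => min (N:ℤ) (x i + (r:ℤ)))

lemma mem_ball : y ∈ ball d N x r ↔
    ∀ i, max 0 (x i - (r:ℤ)) ≤ y i ∧ y i ≤ min (N:ℤ) (x i + (r:ℤ)) := by
  simp [ball, Finset.mem_Icc, Pi.le_def, forall_and]

lemma mem_box_iff : x ∈ Finset.Icc (0 : Fin d → ℤ) (fun _ => (N:ℤ)) ↔
    ∀ i, 0 ≤ x i ∧ x i ≤ (N:ℤ) := by
  simp [Finset.mem_Icc, Pi.le_def, forall_and]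

lemma ball_subset_box : ball d N x r ⊆ Finset.Icc (0 : Fin d → ℤ) (fun _ => (N:ℤ)) := by
  intro y hy
  rw [mem_ball] at hy
  rw [mem_box_iff]
  intro i
  exact ⟨le_trans (le_max_left _ _) (hy i).1, le_trans (hy i).2 (min_le_left _ _)⟩

lemma mem_ball_self (hx : x ∈ Finset.Icc (0 : Fin d → ℤ) (fun _ => (N:ℤ))) :
    x ∈ ball d N x r := by
  rw [mem_box_iff] at hx
  rw [mem_ball]
  intro i
  have := hx i
  omega

lemma ball_mono (h : r ≤ s) : ball d N x r ⊆ ball d N x s := by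
  intro y hy
  rw [mem_ball] at hy ⊢
  intro i
  have := hy i
  have : (r:ℤ) ≤ (s:ℤ) := by exact_mod_cast h
  omega

lemma card_ball_le : (ball d N x r).card ≤ (2*r+1)^d := by
  rw [ball, Pi.card_Icc]
  calc ∏ i, (Finset.Icc (max 0 (x i - (r:ℤ))) (min (N:ℤ) (x i + (r:ℤ)))).card
      ≤ ∏ _i : Fin d, (2*r+1) := by
        apply Finset.prod_le_prod'
        intro i _
        rw [Int.card_Icc]
        omega
    _ = (2*r+1)^d := by simp

lemma card_ball_ge (hx : x ∈ Finset.Icc (0 : Fin d → ℤ) (fun _ => (N:ℤ))) (hr : r ≤ N) :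
    (r+1)^d ≤ (ball d N x r).card := by
  rw [mem_box_iff] at hx
  rw [ball, Pi.card_Icc]
  calc ((r+1)^d : ℕ) = ∏ _i : Fin d, (r+1) := by simp
    _ ≤ ∏ i, (Finset.Icc (max 0 (x i - (r:ℤ))) (min (N:ℤ) (x i + (r:ℤ)))).card := by
        apply Finset.prod_le_prod'
        intro i _
        rw [Int.card_Icc]
        have := hx i
        have : (r:ℤ) ≤ (N:ℤ) := by exact_mod_cast hr
        omega

lemma dist_le_of_mem_ball (hy : y ∈ ball d N x r) :
    ∑ i, (x i - y i).natAbs ≤ d * r := by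
  rw [mem_ball] at hy
  calc ∑ i, (x i - y i).natAbs ≤ ∑ _i : Fin d, r := by
        apply Finset.sum_le_sum
        intro i _
        have := hy i
        omega
    _ = d * r := by simp [Finset.sum_const, mul_comm]

lemma one_le_dist (hyx : y ≠ x) : 1 ≤ ∑ i, (x i - y i).natAbs := by
  rcases Nat.eq_zero_or_pos (∑ i, (x i - y i).natAbs) with h | h
  · exfalso
    apply hyx
    funext i
    have := (Finset.sum_eq_zero_iff.mp h) i (Finset.mem_univ i)
    omega
  · exact h

variable {V : Finset (Fin d → ℤ)} {R : ℕ}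

lemma annulus_card (hx : x ∈ Finset.Icc (0 : Fin d → ℤ) (fun _ => (N:ℤ)))
    (hV : V ⊆ Finset.Icc (0 : Fin d → ℤ) (fun _ => (N:ℤ))) (hrR : r ≤ R) (hRN : R ≤ N) :
    (R+1)^d ≤ ((ball d N x R \ ball d N x r) ∩ V).card
      + (Finset.Icc (0 : Fin d → ℤ) (fun _ => (N:ℤ)) \ V).card + (2*r+1)^d := by
  set A := ball d N x R \ ball d N x r with hA
  have h1 : (R+1)^d ≤ (ball d N x R).card := card_ball_ge hx hRN
  have h2 : (ball d N x R).card ≤ A.card + (ball d N x r).card := by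
    rw [hA]
    calc (ball d N x R).card = ((ball d N x R \ ball d N x r) ∪ ball d N x r).card := by
          rw [Finset.sdiff_union_of_subset (ball_mono hrR)]
      _ ≤ _ := Finset.card_union_le _ _
  have h3 : A.card = (A ∩ V).card + (A \ V).card := (Finset.card_inter_add_card_sdiff A V).symm
  have h4 : (A \ V).card ≤ (Finset.Icc (0 : Fin d → ℤ) (fun _ => (N:ℤ)) \ V).card := by
    apply Finset.card_le_card
    intro y hy
    rw [Finset.mem_sdiff] at hy ⊢
    exact ⟨ball_subset_box (Finset.mem_sdiff.mp hy.1).1, hy.2⟩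
  have h5 : (ball d N x r).card ≤ (2*r+1)^d := card_ball_le
  omega

lemma annulus_subset_erase (hx : x ∈ Finset.Icc (0 : Fin d → ℤ) (fun _ => (N:ℤ))) :
    (ball d N x R \ ball d N x r) ∩ V ⊆ V.erase x := by
  intro y hy
  rw [Finset.mem_inter, Finset.mem_sdiff] at hy
  rw [Finset.mem_erase]
  refine ⟨?_, hy.2⟩
  intro h
  rw [h] at hy; exact hy.1.2 (mem_ball_self hx)

lemma annulus_sum_ge (hd : 1 ≤ d) (hx : x ∈ Finset.Icc (0 : Fin d → ℤ) (fun _ => (N:ℤ)))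
    (hR : 1 ≤ R) :
    ((((ball d N x R \ ball d N x r) ∩ V).card : ℝ)) / ((d:ℝ)*R)^d
      ≤ ∑ y ∈ (ball d N x R \ ball d N x r) ∩ V, (1:ℝ) / (∑ i, ((x i - y i).natAbs : ℝ))^d := by
  have hdR : (0:ℝ) < ((d:ℝ)*R)^d := by positivity
  rw [div_eq_mul_one_div]
  have := Finset.card_nsmul_le_sum ((ball d N x R \ ball d N x r) ∩ V)
      (fun y => (1:ℝ) / (∑ i, ((x i - y i).natAbs : ℝ))^d) ((1:ℝ)/((d:ℝ)*R)^d) ?_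
  · simpa [nsmul_eq_mul] using this
  · intro y hy
    rw [Finset.mem_inter, Finset.mem_sdiff] at hy
    have hne : y ≠ x := by
      intro h
      rw [h] at hy; exact hy.1.2 (mem_ball_self hx)
    have hdistℕ : 1 ≤ ∑ i, (x i - y i).natAbs := one_le_dist hne
    have hdistR : ∑ i, (x i - y i).natAbs ≤ d * R := dist_le_of_mem_ball hy.1.1
    have hcast : (∑ i, ((x i - y i).natAbs : ℝ)) = ((∑ i, (x i - y i).natAbs : ℕ) : ℝ) := by
      push_cast; ring
    show (1:ℝ)/((d:ℝ)*R)^d ≤ 1 / (∑ i, ((x i - y i).natAbs : ℝ))^d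
    rw [hcast]
    apply one_div_le_one_div_of_le
    · positivity
    · apply pow_le_pow_left₀ (by positivity)
      exact_mod_cast hdistR

lemma good_annulus (hd : 1 ≤ d) (hx : x ∈ Finset.Icc (0 : Fin d → ℤ) (fun _ => (N:ℤ)))
    (hV : V ⊆ Finset.Icc (0 : Fin d → ℤ) (fun _ => (N:ℤ))) (j : ℕ)
    (hjN : 16^(j+1) ≤ N)
    (hk : 4 * (Finset.Icc (0 : Fin d → ℤ) (fun _ => (N:ℤ)) \ V).card ≤ 16^((j+1)*d)) :
    (1:ℝ)/(2 * (d:ℝ)^d)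
      ≤ ∑ y ∈ (ball d N x (16^(j+1)) \ ball d N x (16^j)) ∩ V,
          (1:ℝ) / (∑ i, ((x i - y i).natAbs : ℝ))^d := by
  set r : ℕ := 16^j with hr
  set R : ℕ := 16^(j+1) with hR
  have hr1 : 1 ≤ r := Nat.one_le_pow _ _ (by norm_num)
  have hR1 : 1 ≤ R := Nat.one_le_pow _ _ (by norm_num)
  have hrR : r ≤ R := Nat.pow_le_pow_right (by norm_num) (by omega)
  have hX : 16^((j+1)*d) = R^d := by rw [hR, pow_mul]
  set X : ℕ := R^d with hXdef
  -- combinatorial count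
  have hcard := annulus_card (r := r) (R := R) hx hV hrR hjN
  have hXle : X ≤ (R+1)^d := Nat.pow_le_pow_left (by omega) d
  have hsmall : 4 * (2*r+1)^d ≤ X := by
    calc 4 * (2*r+1)^d ≤ 4 * (3*r)^d := by
          apply Nat.mul_le_mul_left
          exact Nat.pow_le_pow_left (by omega) d
      _ ≤ 5^d * (3*r)^d := by
          apply Nat.mul_le_mul_right
          calc 4 ≤ 5^1 := by norm_num
            _ ≤ 5^d := Nat.pow_le_pow_right (by norm_num) hd
      _ = (15*r)^d := by rw [← Nat.mul_pow]; ring_nf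
      _ ≤ (16*r)^d := Nat.pow_le_pow_left (by omega) d
      _ = X := by rw [hXdef, hR, pow_succ, mul_comm (16^j) 16]
  rw [hX] at hk
  set W := (ball d N x R \ ball d N x r) ∩ V with hW
  have hWX : X ≤ 2 * W.card := by omega
  have hsum := annulus_sum_ge (r := r) (R := R) (V := V) hd hx hR1
  refine le_trans ?_ hsum
  rw [div_le_div_iff₀ (by positivity) (by positivity)]
  have hcast : ((X:ℕ):ℝ) ≤ 2 * (W.card : ℝ) := by exact_mod_cast hWX
  have hXR : ((X:ℕ):ℝ) = (R:ℝ)^d := by rw [hXdef]; push_cast; ring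
  have hRpos : (0:ℝ) < (R:ℝ)^d := by positivity
  calc (1:ℝ) * ((d:ℝ)*R)^d = ((d:ℝ)^d * (R:ℝ)^d) := by rw [one_mul, mul_pow]
    _ ≤ (W.card:ℝ) * (2 * (d:ℝ)^d) := by
        nlinarith [hcast, hXR, pow_pos (show (0:ℝ) < d by exact_mod_cast hd) d]

lemma dyadic_total (hd : 1 ≤ d) (hx : x ∈ Finset.Icc (0 : Fin d → ℤ) (fun _ => (N:ℤ)))
    (hV : V ⊆ Finset.Icc (0 : Fin d → ℤ) (fun _ => (N:ℤ))) (a b : ℕ)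
    (hgood : ∀ j ∈ Finset.Ico a b, 16^(j+1) ≤ N ∧
      4 * (Finset.Icc (0 : Fin d → ℤ) (fun _ => (N:ℤ)) \ V).card ≤ 16^((j+1)*d)) :
    ((b - a : ℕ):ℝ) * ((1:ℝ)/(2 * (d:ℝ)^d))
      ≤ ∑ y ∈ V.erase x, (1:ℝ) / (∑ i, ((x i - y i).natAbs : ℝ))^d := by
  set f : (Fin d → ℤ) → ℝ := fun y => (1:ℝ) / (∑ i, ((x i - y i).natAbs : ℝ))^d with hf
  have hfnn : ∀ y, 0 ≤ f y := by intro y; rw [hf]; positivity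
  set F : ℕ → Finset (Fin d → ℤ) :=
    fun j => (ball d N x (16^(j+1)) \ ball d N x (16^j)) ∩ V with hF
  have hdisj : (↑(Finset.Ico a b) : Set ℕ).PairwiseDisjoint F := by
    intro i _ j _ hij
    simp only [Function.onFun]
    rw [Finset.disjoint_left]
    intro y hyi hyj
    rcases lt_or_gt_of_ne hij with h | h
    · have h1 : y ∈ ball d N x (16^(i+1)) := (Finset.mem_sdiff.mp (Finset.mem_inter.mp hyi).1).1
      have h2 : y ∉ ball d N x (16^j) := (Finset.mem_sdiff.mp (Finset.mem_inter.mp hyj).1).2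
      exact h2 (ball_mono (Nat.pow_le_pow_right (by norm_num) (by omega)) h1)
    · have h1 : y ∈ ball d N x (16^(j+1)) := (Finset.mem_sdiff.mp (Finset.mem_inter.mp hyj).1).1
      have h2 : y ∉ ball d N x (16^i) := (Finset.mem_sdiff.mp (Finset.mem_inter.mp hyi).1).2
      exact h2 (ball_mono (Nat.pow_le_pow_right (by norm_num) (by omega)) h1)
  have hsub : (Finset.Ico a b).biUnion F ⊆ V.erase x :=
    Finset.biUnion_subset.mpr fun j _ => annulus_subset_erase hx
  calc ((b - a : ℕ):ℝ) * ((1:ℝ)/(2 * (d:ℝ)^d))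
      = ∑ _j ∈ Finset.Ico a b, (1:ℝ)/(2 * (d:ℝ)^d) := by
        rw [Finset.sum_const, Nat.card_Ico, nsmul_eq_mul]
    _ ≤ ∑ j ∈ Finset.Ico a b, ∑ y ∈ F j, f y := by
        apply Finset.sum_le_sum
        intro j hj
        exact good_annulus hd hx hV j (hgood j hj).1 (hgood j hj).2
    _ = ∑ y ∈ (Finset.Ico a b).biUnion F, f y := (Finset.sum_biUnion hdisj).symm
    _ ≤ ∑ y ∈ V.erase x, f y :=
        Finset.sum_le_sum_of_subset_of_nonneg hsub (fun y _ _ => hfnn y)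

lemma big_annulus (hd : 1 ≤ d) (hx : x ∈ Finset.Icc (0 : Fin d → ℤ) (fun _ => (N:ℤ)))
    (hV : V ⊆ Finset.Icc (0 : Fin d → ℤ) (fun _ => (N:ℤ))) (hN : 16 ≤ N)
    (hk : ((Finset.Icc (0 : Fin d → ℤ) (fun _ => (N:ℤ)) \ V).card : ℝ) ≤ (N:ℝ)^d/2) :
    (1:ℝ)/(4 * (d:ℝ)^d)
      ≤ ∑ y ∈ V.erase x, (1:ℝ) / (∑ i, ((x i - y i).natAbs : ℝ))^d := by
  set r : ℕ := N/16 with hr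
  set k := (Finset.Icc (0 : Fin d → ℤ) (fun _ => (N:ℤ)) \ V).card with hkdef
  set W := (ball d N x N \ ball d N x r) ∩ V with hW
  have hcard := annulus_card (r := r) (R := N) hx hV (by omega) le_rfl
  have hsmall : 4 * (2*r+1)^d ≤ N^d := by
    have h1 : 2*r+1 ≤ N/4 := by omega
    calc 4 * (2*r+1)^d ≤ 4^d * (N/4)^d := by
          apply Nat.mul_le_mul
          · calc (4:ℕ) = 4^1 := by norm_num
              _ ≤ 4^d := Nat.pow_le_pow_right (by norm_num) hd
          · exact Nat.pow_le_pow_left h1 d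
      _ = (4*(N/4))^d := by rw [← Nat.mul_pow]
      _ ≤ N^d := Nat.pow_le_pow_left (by omega) d
  -- real count bound
  have hNX : (N:ℕ)^d ≤ (N+1)^d := Nat.pow_le_pow_left (by omega) d
  have hWk : (N:ℕ)^d ≤ W.card + k + (2*r+1)^d := le_trans hNX hcard
  have hWR : ((N:ℝ)^d)/4 ≤ (W.card : ℝ) := by
    have h1 : ((N^d : ℕ):ℝ) ≤ (W.card:ℝ) + (k:ℝ) + (((2*r+1)^d : ℕ):ℝ) := by exact_mod_cast hWk
    have h2 : 4 * (((2*r+1)^d : ℕ):ℝ) ≤ ((N^d : ℕ):ℝ) := by exact_mod_cast hsmall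
    have h3 : ((N^d : ℕ):ℝ) = (N:ℝ)^d := by push_cast; ring
    rw [h3] at h1 h2
    linarith
  have hsum := annulus_sum_ge (r := r) (R := N) (V := V) hd hx (by omega)
  have hsub := annulus_subset_erase (r := r) (R := N) (V := V) hx
  have hfinal : (1:ℝ)/(4 * (d:ℝ)^d) ≤ (W.card : ℝ) / ((d:ℝ)*N)^d := by
    rw [div_le_div_iff₀ (by positivity) (by positivity), one_mul, mul_pow]
    have hNpos : (0:ℝ) < (N:ℝ)^d := by positivity
    nlinarith [pow_pos (show (0:ℝ) < d by exact_mod_cast hd) d]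
  refine le_trans (le_trans hfinal hsum) ?_
  apply Finset.sum_le_sum_of_subset_of_nonneg hsub
  intro y _ _
  positivity

end Stmt3Aux

open Stmt3Aux in
/-- Lower bound on the weight of a site relative to a set `V ⊆ [N]^d` whose
complement is at most half the box: `∑_{y ∈ V, y ≠ x} ‖x-y‖₁^{-d} ≥ c log(N^d/|V^c|)`. -/
theorem stmt_3 (d : ℕ) (hd : 1 ≤ d) :
    ∃ c : ℝ, 0 < c ∧ ∃ N₀ : ℕ, ∀ N : ℕ, N₀ ≤ N →
      ∀ x ∈ Finset.Icc (0 : Fin d → ℤ) (fun _ => (N : ℤ)),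
        ∀ V ⊆ Finset.Icc (0 : Fin d → ℤ) (fun _ => (N : ℤ)),
          ((Finset.Icc (0 : Fin d → ℤ) (fun _ => (N : ℤ)) \ V).card : ℝ)
              ≤ (N : ℝ) ^ d / 2 →
            c * Real.log ((N : ℝ) ^ d /
                ((Finset.Icc (0 : Fin d → ℤ) (fun _ => (N : ℤ)) \ V).card : ℝ))
              ≤ ∑ y ∈ V.erase x, (1 : ℝ) / (∑ i, ((x i - y i).natAbs : ℝ)) ^ d := by
  have hd0 : (0:ℝ) < (d:ℝ) := by exact_mod_cast hd
  have hdd : (0:ℝ) < (d:ℝ)^d := by positivity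
  have hl16 : (0:ℝ) < Real.log 16 := Real.log_pos (by norm_num)
  set c₁ : ℝ := (1:ℝ)/(2 * (d:ℝ)^d) with hc₁
  set c₃ : ℝ := (1:ℝ)/(4 * (d:ℝ)^d) with hc₃
  set D : ℝ := (4*(d:ℝ)+8) * Real.log 16 with hD
  have hDpos : 0 < D := by positivity
  set c : ℝ := min (c₃ / D) (c₁ / (2*(d:ℝ)*Real.log 16)) with hc
  have hcpos : 0 < c := by
    apply lt_min
    · positivity
    · positivity
  refine ⟨c, hcpos, 16, ?_⟩
  intro N hN x hx V hV hhalf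
  set k := (Finset.Icc (0 : Fin d → ℤ) (fun _ => (N : ℤ)) \ V).card with hk
  have hsum_nonneg : (0:ℝ) ≤ ∑ y ∈ V.erase x, (1 : ℝ) / (∑ i, ((x i - y i).natAbs : ℝ)) ^ d := by
    apply Finset.sum_nonneg
    intro y _
    positivity
  rcases Nat.eq_zero_or_pos k with hk0 | hkpos
  · rw [hk0]
    simp only [Nat.cast_zero, div_zero, Real.log_zero, mul_zero]
    exact hsum_nonneg
  -- k ≥ 1
  have hkR : (1:ℝ) ≤ (k:ℝ) := by exact_mod_cast hkpos
  have hNR : (16:ℝ) ≤ (N:ℝ) := by exact_mod_cast hN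
  have hNpos : (0:ℝ) < (N:ℝ) := by linarith
  set T : ℝ := Real.log ((N:ℝ)^d / (k:ℝ)) with hT
  have hTeq : T = (d:ℝ) * Real.log N - Real.log k := by
    rw [hT, Real.log_div (by positivity) (by positivity), Real.log_pow]
  have hlogk : 0 ≤ Real.log k := Real.log_nonneg hkR
  have hlogN : 0 < Real.log N := Real.log_pos (by linarith)
  by_cases hcase : T ≤ D
  · -- regime 2 : single big annulus
    have hs := big_annulus hd hx hV hN hhalf
    have hTnn : 0 ≤ T := by
      rw [hT]
      apply Real.log_nonneg
      rw [le_div_iff₀ (by positivity)]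
      have : (k:ℝ) ≤ (N:ℝ)^d / 2 := hhalf
      nlinarith [pow_le_pow_left₀ (by norm_num : (0:ℝ) ≤ 16) hNR d,
        pow_le_pow_right₀ (by linarith : (1:ℝ) ≤ (N:ℝ)) hd]
    calc c * T ≤ (c₃ / D) * D := by
          apply mul_le_mul (min_le_left _ _) hcase hTnn (le_of_lt (by positivity))
      _ = c₃ := by field_simp
      _ ≤ _ := hs
  · -- regime 1 : dyadic annuli
    push_neg at hcase
    set L := Nat.log 16 N with hL
    set cl := Nat.clog 16 (4*k) with hcl
    set j₀ := cl / d with hj₀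
    have hgood : ∀ j ∈ Finset.Ico j₀ L, 16^(j+1) ≤ N ∧ 4 * k ≤ 16^((j+1)*d) := by
      intro j hj
      rw [Finset.mem_Ico] at hj
      constructor
      · calc (16:ℕ)^(j+1) ≤ 16^L := Nat.pow_le_pow_right (by norm_num) (by omega)
          _ ≤ N := Nat.pow_log_le_self 16 (by omega)
      · calc 4 * k ≤ 16^cl := Nat.le_pow_clog (by norm_num) _
          _ ≤ 16^((j+1)*d) := by
              apply Nat.pow_le_pow_right (by norm_num)
              have h2 := Nat.div_add_mod cl d
              have h3 : cl % d < d := Nat.mod_lt _ (by omega)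
              have h4 : (j₀ + 1) * d ≤ (j+1) * d := Nat.mul_le_mul_right d (by omega)
              have h5 : cl < (j₀ + 1) * d := by
                calc cl = d * j₀ + cl % d := h2.symm
                  _ < d * j₀ + d := by omega
                  _ = (j₀+1)*d := by ring
              omega
    have hdyadic := dyadic_total hd hx hV j₀ L hgood
    -- counting facts
    have hLlow : Real.log N ≤ ((L:ℝ)+1) * Real.log 16 := by
      have h1 : (N:ℝ) ≤ (16:ℝ)^(L+1) := by
        exact_mod_cast (Nat.lt_pow_succ_log_self (by norm_num) N).le
      calc Real.log N ≤ Real.log ((16:ℝ)^(L+1)) := Real.log_le_log (by positivity) h1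
        _ = ((L:ℝ)+1) * Real.log 16 := by rw [Real.log_pow]; push_cast; ring
    have hclpos : 1 ≤ cl := by
      apply Nat.clog_pos (by norm_num)
      omega
    have hclup : ((cl:ℝ) - 1) * Real.log 16 ≤ Real.log (4*(k:ℝ)) := by
      have h1 : ((16:ℝ))^(cl - 1) ≤ 4*(k:ℝ) := by
        have h0 : 16^(cl-1) < 4*k :=
          Nat.pow_pred_clog_lt_self (by norm_num) (show 1 < 4*k by omega)
        calc ((16:ℝ))^(cl-1) = ((16^(cl-1) : ℕ):ℝ) := by push_cast; ring
          _ ≤ ((4*k : ℕ):ℝ) := by exact_mod_cast h0.le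
          _ = 4*(k:ℝ) := by push_cast; ring
      calc ((cl:ℝ) - 1) * Real.log 16 = ((cl - 1 : ℕ):ℝ) * Real.log 16 := by
            rw [Nat.cast_sub hclpos]; norm_num
        _ = Real.log ((16:ℝ)^(cl-1)) := by rw [Real.log_pow]
        _ ≤ Real.log (4*(k:ℝ)) := Real.log_le_log (by positivity) h1
    have hlog4k : Real.log (4*(k:ℝ)) = Real.log 4 + Real.log k :=
      Real.log_mul (by norm_num) (by positivity)
    have hlog4 : Real.log 4 ≤ Real.log 16 := Real.log_le_log (by norm_num) (by norm_num)
    have hclL : (cl:ℝ) * Real.log 16 ≤ Real.log 4 + Real.log k + Real.log 16 := by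
      rw [hlog4k] at hclup
      linarith [hclup]
    have hj₀d : (j₀:ℝ) * (d:ℝ) ≤ (cl:ℝ) := by exact_mod_cast Nat.div_mul_le_self cl d
    have hsub : (L:ℝ) - (j₀:ℝ) ≤ ((L - j₀ : ℕ):ℝ) :=
      sub_le_iff_le_add.mpr (by exact_mod_cast Nat.le_add_of_sub_le le_rfl)
    have e1 : (d:ℝ) * Real.log N ≤ (d:ℝ) * (((L:ℝ)+1) * Real.log 16) :=
      mul_le_mul_of_nonneg_left hLlow hd0.le
    have e2 : ((j₀:ℝ) * (d:ℝ)) * Real.log 16 ≤ (cl:ℝ) * Real.log 16 :=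
      mul_le_mul_of_nonneg_right hj₀d hl16.le
    have key2 : T ≤ 2*(d:ℝ)*Real.log 16 * ((L:ℝ) - (j₀:ℝ)) := by
      have hcase' : (4*(d:ℝ)+8) * Real.log 16 < T := by rw [hD] at hcase; exact hcase
      have hd16 : 0 ≤ (d:ℝ) * Real.log 16 := by positivity
      linarith [e1, e2, hclL, hcase'.le, hl16.le, hlogk, hlog4, hTeq.le, hTeq.ge, hd16]
    have hkey : T / (2*(d:ℝ)*Real.log 16) ≤ ((L - j₀ : ℕ):ℝ) := by
      rw [div_le_iff₀ (by positivity)]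
      calc T ≤ 2*(d:ℝ)*Real.log 16 * ((L:ℝ) - (j₀:ℝ)) := key2
        _ ≤ 2*(d:ℝ)*Real.log 16 * ((L - j₀ : ℕ):ℝ) :=
            mul_le_mul_of_nonneg_left hsub (by positivity)
        _ = ((L - j₀ : ℕ):ℝ) * (2*(d:ℝ)*Real.log 16) := by ring
    have hTpos : 0 ≤ T := le_of_lt (lt_of_le_of_lt hDpos.le hcase)
    calc c * T ≤ (c₁ / (2*(d:ℝ)*Real.log 16)) * T :=
          mul_le_mul_of_nonneg_right (min_le_right _ _) hTpos
      _ = c₁ * (T / (2*(d:ℝ)*Real.log 16)) := by ring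
      _ ≤ c₁ * ((L - j₀ : ℕ):ℝ) := by
          apply mul_le_mul_of_nonneg_left hkey
          rw [hc₁]; positivity
      _ = ((L - j₀ : ℕ):ℝ) * c₁ := by ring
      _ ≤ _ := hdyadic
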